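/- The set of all sequences ℕ → R with termwise addition and the Newton product (a ⊠ b)_n = Σ_{i=0}^n Σ_{j=0}^i C(n,i) C(i,j) a_i b_{n-j} forms a commutative R-algebra with multiplicative identity the sequence (1,0,0,...). -/

import Mathlib

open Finset

/-- Newton (multinomial convolution) product of sequences. -/
def newton {R : Type*} [CommRing R] (a b : ℕ → R) : ℕ → R :=
  fun n => ∑ i ∈ Finset.range (n + 1), ∑ j ∈ Finset.range (i + 1),
    (n.choose i : R) * (i.choose j : R) * a i * b (n - j)

section Aux

variable {R : Type*} [CommRing R]

/-- The binomial transform. -/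
private def phiB (a : ℕ → R) : ℕ → R := fun n => ∑ k ∈ Finset.range (n + 1), (n.choose k : R) * a k

private lemma phiB_inj : Function.Injective (phiB (R := R)) := by
  intro a b h
  funext n
  induction n using Nat.strong_induction_on with
  | _ n ih =>
    have h1 : phiB a n = phiB b n := congrFun h n
    simp only [phiB] at h1
    rw [Finset.sum_range_succ, Finset.sum_range_succ, Nat.choose_self] at h1
    have h2 : ∑ k ∈ Finset.range n, (n.choose k : R) * a k
        = ∑ k ∈ Finset.range n, (n.choose k : R) * b k :=
      Finset.sum_congr rfl fun k hk => by rw [ih k (Finset.mem_range.1 hk)]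
    rw [h2] at h1
    simpa using add_left_cancel h1

private lemma vander_sum (b : ℕ → R) {i n : ℕ} (h : i ≤ n) :
    ∑ s ∈ Finset.range (n - i + 1), ∑ t ∈ Finset.range (i + 1),
      ((n - i).choose s : R) * (i.choose t : R) * b (s + t)
    = ∑ l ∈ Finset.range (n + 1), (n.choose l : R) * b l := by
  -- extend both inner and outer ranges to `range (n+1)`
  have inner_ext : ∀ s : ℕ, ∑ t ∈ Finset.range (i + 1),
      ((n - i).choose s : R) * (i.choose t : R) * b (s + t)
      = ∑ t ∈ Finset.range (n + 1), ((n - i).choose s : R) * (i.choose t : R) * b (s + t) := by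
    intro s
    refine Finset.sum_subset (Finset.range_subset_range.2 (by omega)) ?_
    intro t _ ht
    have hti : ¬ t < i + 1 := fun h' => ht (Finset.mem_range.2 h')
    rw [Nat.choose_eq_zero_of_lt (show i < t by omega)]
    simp
  have ext1 : ∑ s ∈ Finset.range (n - i + 1), ∑ t ∈ Finset.range (i + 1),
      ((n - i).choose s : R) * (i.choose t : R) * b (s + t)
      = ∑ s ∈ Finset.range (n + 1), ∑ t ∈ Finset.range (n + 1),
      ((n - i).choose s : R) * (i.choose t : R) * b (s + t) := by
    rw [Finset.sum_congr rfl fun s _ => inner_ext s]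
    refine Finset.sum_subset (Finset.range_subset_range.2 (by omega)) ?_
    intro s _ hs
    have hsi : ¬ s < n - i + 1 := fun h' => hs (Finset.mem_range.2 h')
    refine Finset.sum_eq_zero fun t _ => ?_
    rw [Nat.choose_eq_zero_of_lt (show n - i < s by omega)]
    simp
  rw [ext1]
  -- rewrite RHS using Vandermonde
  have vdm : ∀ l, (n.choose l : R) * b l
      = ∑ p ∈ Finset.HasAntidiagonal.antidiagonal l, ((n - i).choose p.1 : R) * (i.choose p.2 : R) * b (p.1 + p.2) := by
    intro l
    have hrw : n.choose l = ((n - i) + i).choose l := by rw [Nat.sub_add_cancel h]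
    rw [hrw, Nat.add_choose_eq]
    push_cast
    rw [Finset.sum_mul]
    refine Finset.sum_congr rfl fun p hp => ?_
    rw [Finset.HasAntidiagonal.mem_antidiagonal] at hp
    rw [hp]
  simp only [vdm]
  -- extend the antidiagonal sum to l ∈ range (2n+1)
  have ext2 : ∑ l ∈ Finset.range (n + 1), ∑ p ∈ Finset.HasAntidiagonal.antidiagonal l,
      ((n - i).choose p.1 : R) * (i.choose p.2 : R) * b (p.1 + p.2)
      = ∑ l ∈ Finset.range (2 * n + 1), ∑ p ∈ Finset.HasAntidiagonal.antidiagonal l,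
      ((n - i).choose p.1 : R) * (i.choose p.2 : R) * b (p.1 + p.2) := by
    refine Finset.sum_subset (Finset.range_subset_range.2 (by omega)) ?_
    intro l _ hl'
    have hln : ¬ l < n + 1 := fun h' => hl' (Finset.mem_range.2 h')
    refine Finset.sum_eq_zero fun p hp => ?_
    rw [Finset.HasAntidiagonal.mem_antidiagonal] at hp
    rcases le_or_gt p.1 (n - i) with h1 | h1
    · rw [Nat.choose_eq_zero_of_lt (show i < p.2 by omega)]
      simp
    · rw [Nat.choose_eq_zero_of_lt h1]
      simp
  rw [ext2]
  have disj : (↑(Finset.range (2 * n + 1)) : Set ℕ).PairwiseDisjoint Finset.HasAntidiagonal.antidiagonal := by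
    intro l _ l' _ hne
    simp only [Finset.disjoint_left]
    intro p hp hp'
    rw [Finset.HasAntidiagonal.mem_antidiagonal] at hp hp'
    exact hne (hp ▸ hp')
  rw [← Finset.sum_biUnion disj]
  rw [show ∑ s ∈ Finset.range (n + 1), ∑ t ∈ Finset.range (n + 1),
      ((n - i).choose s : R) * (i.choose t : R) * b (s + t)
      = ∑ p ∈ Finset.range (n + 1) ×ˢ Finset.range (n + 1),
      ((n - i).choose p.1 : R) * (i.choose p.2 : R) * b (p.1 + p.2) from
    (Finset.sum_product' _ _ _).symm]
  refine Finset.sum_subset ?_ ?_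
  · intro p hp
    simp only [Finset.mem_product, Finset.mem_range] at hp
    exact Finset.mem_biUnion.2 ⟨p.1 + p.2, Finset.mem_range.2 (by omega),
      Finset.HasAntidiagonal.mem_antidiagonal.2 rfl⟩
  · intro p _ hp
    simp only [Finset.mem_product, Finset.mem_range, not_and_or, not_lt] at hp
    rcases hp with h1 | h1
    · rw [Nat.choose_eq_zero_of_lt (show n - i < p.1 by omega)]
      simp
    · rw [Nat.choose_eq_zero_of_lt (show i < p.2 by omega)]
      simp

private lemma tri_swap (f : ℕ → ℕ → R) (n : ℕ) :
    ∑ m ∈ Finset.range (n + 1), ∑ i ∈ Finset.range (m + 1), f m i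
    = ∑ i ∈ Finset.range (n + 1), ∑ m ∈ Finset.Ico i (n + 1), f m i := by
  simp only [Finset.range_eq_Ico]
  exact (Finset.sum_Ico_Ico_comm 0 (n + 1) fun i m => f m i).symm

private lemma inner_i (a b : ℕ → R) {i n : ℕ} (hi : i ≤ n) :
    ∑ m ∈ Finset.Ico i (n + 1), ∑ j ∈ Finset.range (i + 1),
      (n.choose m : R) * ((m.choose i : R) * (i.choose j : R) * a i * b (m - j))
    = (n.choose i : R) * a i * ∑ l ∈ Finset.range (n + 1), (n.choose l : R) * b l := by
  rw [Finset.sum_Ico_eq_sum_range]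
  have key : ∀ s ∈ Finset.range (n + 1 - i),
      ∑ j ∈ Finset.range (i + 1),
        (n.choose (i + s) : R) * (((i + s).choose i : R) * (i.choose j : R) * a i * b (i + s - j))
      = (n.choose i : R) * a i *
        ∑ t ∈ Finset.range (i + 1), ((n - i).choose s : R) * (i.choose t : R) * b (s + t) := by
    intro s hs
    have hsn : i + s ≤ n := by
      rw [Finset.mem_range] at hs; omega
    rw [← Finset.sum_range_reflect]
    rw [Finset.mul_sum]
    refine Finset.sum_congr rfl fun t ht => ?_
    rw [Finset.mem_range] at ht
    have ht' : t ≤ i := by omega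
    have e1 : i + 1 - 1 - t = i - t := by omega
    rw [e1]
    have e2 : i.choose (i - t) = i.choose t := Nat.choose_symm ht'
    have e3 : i + s - (i - t) = s + t := by omega
    have e4 : (n.choose (i + s) : R) * ((i + s).choose i : R)
        = (n.choose i : R) * ((n - i).choose s : R) := by
      have := Nat.choose_mul (n := n) (Nat.le_add_right i s)
      have e5 : i + s - i = s := by omega
      rw [e5] at this
      exact_mod_cast congrArg (Nat.cast : ℕ → R) this
    rw [e2, e3]
    calc (n.choose (i + s) : R) * (((i + s).choose i : R) * (i.choose t : R) * a i * b (s + t))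
        = ((n.choose (i + s) : R) * ((i + s).choose i : R)) * (i.choose t : R) * a i * b (s + t) := by
          ring
      _ = ((n.choose i : R) * ((n - i).choose s : R)) * (i.choose t : R) * a i * b (s + t) := by
          rw [e4]
      _ = (n.choose i : R) * a i * (((n - i).choose s : R) * (i.choose t : R) * b (s + t)) := by
          ring
  rw [Finset.sum_congr rfl key, ← Finset.mul_sum]
  have : n + 1 - i = n - i + 1 := by omega
  rw [this, vander_sum b hi]

private lemma phiB_newton (a b : ℕ → R) (n : ℕ) :
    phiB (newton a b) n = phiB a n * phiB b n := by
  have lhs_eq : phiB (newton a b) n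
      = ∑ i ∈ Finset.range (n + 1), ∑ m ∈ Finset.Ico i (n + 1), ∑ j ∈ Finset.range (i + 1),
        (n.choose m : R) * ((m.choose i : R) * (i.choose j : R) * a i * b (m - j)) := by
    simp only [phiB, newton, Finset.mul_sum]
    exact tri_swap _ n
  have rhs_eq : phiB a n * phiB b n
      = ∑ i ∈ Finset.range (n + 1),
        (n.choose i : R) * a i * ∑ l ∈ Finset.range (n + 1), (n.choose l : R) * b l := by
    simp only [phiB]
    rw [Finset.sum_mul]
  rw [lhs_eq, rhs_eq]
  refine Finset.sum_congr rfl fun i hi => ?_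
  rw [Finset.mem_range] at hi
  exact inner_i a b (show i ≤ n by omega)

end Aux

/-- Sequences with termwise addition and the Newton product form a commutative
`R`-algebra, with multiplicative identity `(1,0,0,…)`. -/
theorem newton_comm_algebra {R : Type*} [CommRing R] :
    (∀ a b c : ℕ → R, newton (newton a b) c = newton a (newton b c)) ∧
    (∀ a b : ℕ → R, newton a b = newton b a) ∧
    (∀ a b c : ℕ → R, newton a (b + c) = newton a b + newton a c) ∧
    (∀ a b c : ℕ → R, newton (a + b) c = newton a c + newton b c) ∧
    (∀ a : ℕ → R, newton a (fun n => if n = 0 then (1 : R) else 0) = a) ∧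
    (∀ a : ℕ → R, newton (fun n => if n = 0 then (1 : R) else 0) a = a) ∧
    (∀ (r : R) (a b : ℕ → R), newton (r • a) b = r • newton a b) ∧
    (∀ (r : R) (a b : ℕ → R), newton a (r • b) = r • newton a b) := by
  refine ⟨?_, ?_, ?_, ?_, ?_, ?_, ?_, ?_⟩
  · intro a b c
    apply phiB_inj
    funext n
    rw [phiB_newton, phiB_newton, phiB_newton, phiB_newton]
    ring
  · intro a b
    apply phiB_inj
    funext n
    rw [phiB_newton, phiB_newton]
    ring
  · intro a b c
    funext n
    simp only [newton, Pi.add_apply, mul_add, Finset.sum_add_distrib]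
  · intro a b c
    funext n
    simp only [newton, Pi.add_apply, mul_add, add_mul, Finset.sum_add_distrib]
  · intro a
    funext n
    show (∑ i ∈ Finset.range (n + 1), ∑ j ∈ Finset.range (i + 1),
      (n.choose i : R) * (i.choose j : R) * a i *
        (if n - j = 0 then (1 : R) else 0)) = a n
    rw [Finset.sum_eq_single_of_mem n (Finset.self_mem_range_succ n)]
    · rw [Finset.sum_eq_single_of_mem n (Finset.self_mem_range_succ n)]
      · simp
      · intro j hj hjn
        rw [Finset.mem_range] at hj
        have : n - j ≠ 0 := by omega
        simp [this]
    · intro i hi hin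
      rw [Finset.mem_range] at hi
      refine Finset.sum_eq_zero fun j hj => ?_
      rw [Finset.mem_range] at hj
      have : n - j ≠ 0 := by omega
      simp [this]
  · intro a
    funext n
    show (∑ i ∈ Finset.range (n + 1), ∑ j ∈ Finset.range (i + 1),
      (n.choose i : R) * (i.choose j : R) *
        (if i = 0 then (1 : R) else 0) * a (n - j)) = a n
    rw [Finset.sum_eq_single_of_mem 0 (Finset.mem_range.2 (by omega))]
    · simp
    · intro i _ hi0
      refine Finset.sum_eq_zero fun j _ => ?_
      simp [hi0]
  · intro r a b
    funext n
    simp only [newton, Pi.smul_apply, smul_eq_mul, Finset.mul_sum]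
    refine Finset.sum_congr rfl fun i _ => Finset.sum_congr rfl fun j _ => ?_
    ring
  · intro r a b
    funext n
    simp only [newton, Pi.smul_apply, smul_eq_mul, Finset.mul_sum]
    refine Finset.sum_congr rfl fun i _ => Finset.sum_congr rfl fun j _ => ?_
    ring
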